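/- arXiv:1001.0622 — 2 statements merged into one kernel-verified Lean document; each statement's English description precedes it below -/
import Mathlib

section
/- For every real ρ ≥ 1 and all nonnegative integers p, p', q, q', there exists a positive real number λ = λ(p,p',q,q') such that for all A ∈ M(p,p';F) and B ∈ M(q,q';F) one has λ·‖A‖_ρ·‖B‖_ρ ≤ ‖A⊙B‖_ρ. -/
open scoped BigOperators ENNReal

noncomputable section

/-- The degree `|α|` of a multi-index `α ∈ ℕ^n`. -/
def mdeg {n : ℕ} (α : Fin n → ℕ) : ℕ := ∑ i, α i

/-- The factorial `α! = α₁! ⋯ αₙ!` of a multi-index. -/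
def mfact {n : ℕ} (α : Fin n → ℕ) : ℕ := ∏ i, (α i).factorial

/-- The multi-indices in `ℕ^n` of degree `p`. -/
abbrev MIdx (n p : ℕ) := {α : Fin n → ℕ // mdeg α = p}

instance (n p : ℕ) : Fintype (MIdx n p) :=
  Fintype.subtype (Finset.Nat.antidiagonalTuple n p) (fun α => by
    simp [Finset.Nat.mem_antidiagonalTuple, mdeg])

/-- The space `M(p,p';F)` of matrices with rows indexed by degree-`p` multi-indices in `ℕ^n`
and columns indexed by degree-`p'` multi-indices in `ℕ^n'`. -/
abbrev MMat (n n' p p' : ℕ) (F : Type*) := MIdx n p → MIdx n' p' → F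

lemma mdeg_sub {n p q : ℕ} (α : MIdx n (p + q)) (β : MIdx n p) (h : ∀ i, β.1 i ≤ α.1 i) :
    mdeg (α.1 - β.1) = q := by
  have h1 : mdeg (α.1 - β.1) + mdeg β.1 = mdeg α.1 := by
    simp only [mdeg, ← Finset.sum_add_distrib]
    exact Finset.sum_congr rfl fun i _ => Nat.sub_add_cancel (h i)
  have h2 := α.2
  have h3 := β.2
  omega

/-- The product `⊙` of `A ∈ M(p,p';F)` and `B ∈ M(q,q';F)`:
`(A⊙B)_{α,α'} = Σ_{β≤α, β'≤α', |β|=p, |β'|=p'} (α!/(β!(α−β)!)) A_{β,β'} B_{α−β,α'−β'}`. -/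
def oprod {n n' p p' q q' : ℕ} {F : Type*} [RCLike F]
    (A : MMat n n' p p' F) (B : MMat n n' q q' F) : MMat n n' (p + q) (p' + q') F :=
  fun α α' =>
    ∑ β : MIdx n p, ∑ β' : MIdx n' p',
      if h : (∀ i, β.1 i ≤ α.1 i) ∧ (∀ j, β'.1 j ≤ α'.1 j) then
        ((mfact α.1 : F) / ((mfact β.1 : F) * (mfact (α.1 - β.1) : F))) * A β β' *
          B ⟨α.1 - β.1, mdeg_sub α β h.1⟩ ⟨α'.1 - β'.1, mdeg_sub α' β' h.2⟩
      else 0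

/-- Change the degree parameter of a multi-index along an equality of natural numbers. -/
def recast {n a b : ℕ} (h : a = b) (α : MIdx n a) : MIdx n b := ⟨α.1, h ▸ α.2⟩

/-- The ordinary matrix product. -/
def mmul {n n' p q q' : ℕ} {F : Type*} [RCLike F]
    (A : MMat n n p q F) (B : MMat n n' q q' F) : MMat n n' p q' F :=
  fun α α' => ∑ β : MIdx n q, A α β * B β α'

/-- The `m`-th `⊙`-power of a row `h ∈ M(0,1;F)`. -/
def opowRow {n : ℕ} {F : Type*} [RCLike F] (h : MMat n n 0 1 F) : (m : ℕ) → MMat n n 0 m F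
  | 0 => fun _ _ => 1
  | m + 1 => fun z α => oprod h (opowRow h m) z (recast (Nat.add_comm m 1) α)

/-- The `m`-th `⊙`-power of a column `v ∈ M(1,0;F)`. -/
def opowCol {n : ℕ} {F : Type*} [RCLike F] (v : MMat n n 1 0 F) : (m : ℕ) → MMat n n m 0 F
  | 0 => fun _ _ => 1
  | m + 1 => fun α z => oprod v (opowCol v m) (recast (Nat.add_comm m 1) α) z

/-- The `⊙`-product `h¹ ⊙ h² ⊙ ⋯ ⊙ hᵐ` of a family of rows `hⁱ ∈ M(0,1;F)`. -/
def oprodRowFamily {n : ℕ} {F : Type*} [RCLike F] :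
    (m : ℕ) → (Fin m → MMat n n 0 1 F) → MMat n n 0 m F
  | 0, _ => fun _ _ => 1
  | m + 1, hs => fun z α =>
      oprod (hs 0) (oprodRowFamily m fun i => hs i.succ) z (recast (Nat.add_comm m 1) α)

/-- The row vector `(h₁,…,hₙ) ∈ M(0,1;F)` determined by `h : Fin n → F`; its entry at the
degree-one column index `α'` is `h^{α'}`. -/
def rowOf {n : ℕ} {F : Type*} [RCLike F] (h : Fin n → F) : MMat n n 0 1 F :=
  fun _ α' => ∏ i, h i ^ α'.1 i

/-- The column vector `(v₁,…,vₙ) ∈ M(1,0;F)` determined by `v : Fin n → F`. -/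
def colOf {n : ℕ} {F : Type*} [RCLike F] (v : Fin n → F) : MMat n n 1 0 F :=
  fun α _ => ∏ i, v i ^ α.1 i

/-- The unit matrix `E_k ∈ M_{n,n}(k,k;F)`. -/
def unitMat (n k : ℕ) (F : Type*) [RCLike F] : MMat n n k k F :=
  fun α β => if α = β then 1 else 0

/-- The `ρ`-norm `‖A‖_ρ = (Σ_{α,α'} |A_{α,α'}|^ρ/(α!(p!p'!)^{ρ−1}))^{1/ρ}` on `M(p,p';F)`. -/
def rnorm {n n' p p' : ℕ} {F : Type*} [RCLike F] (ρ : ℝ) (A : MMat n n' p p' F) : ℝ :=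
  (∑ α : MIdx n p, ∑ α' : MIdx n' p',
      ‖A α α'‖ ^ ρ /
        ((mfact α.1 : ℝ) * ((p.factorial * p'.factorial : ℕ) : ℝ) ^ (ρ - 1))) ^ (1 / ρ)

/-- The `∞`-norm `‖A‖_∞ = sup_{α,α'} |A_{α,α'}| / (p!p'!)` on `M(p,p';F)`. -/
def rnormInf {n n' p p' : ℕ} {F : Type*} [RCLike F] (A : MMat n n' p p' F) : ℝ :=
  (⨆ x : MIdx n p × MIdx n' p', ‖A x.1 x.2‖) / ((p.factorial * p'.factorial : ℕ) : ℝ)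

/-- The `σ`-norm of a vector in `F^n`, for a real exponent `σ`. -/
def vnorm {n : ℕ} {F : Type*} [RCLike F] (σ : ℝ) (h : Fin n → F) : ℝ :=
  (∑ i, ‖h i‖ ^ σ) ^ (1 / σ)

/-- The `σ`-norm of a vector in `F^n`, for an extended real exponent `σ`
(`= max_i |h_i|` when `σ = ∞`). -/
def vnormE {n : ℕ} {F : Type*} [RCLike F] (σ : ℝ≥0∞) (h : Fin n → F) : ℝ :=
  if σ = ∞ then ⨆ i, ‖h i‖ else (∑ i, ‖h i‖ ^ σ.toReal) ^ (1 / σ.toReal)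

/-- Absolute convergence of the power series `Σ_m x^{(m)}/m!·A(m)` at the point `h ∈ F^n`:
for every column index `α'` of degree `q'`, the family `|h^α/α! · A(|α|)_{α,α'}|`, indexed by
all multi-indices `α ∈ ℕ^n`, is summable. -/
def AbsConvAt {n n' q' : ℕ} {F : Type*} [RCLike F]
    (A : (m : ℕ) → MMat n n' m q' F) (h : Fin n → F) : Prop :=
  ∀ α' : MIdx n' q', Summable fun α : Fin n → ℕ =>
    ‖(∏ i, h i ^ α i) / (mfact α : F) * A (mdeg α) ⟨α, rfl⟩ α'‖

/-- `r = limsup_m ‖A(m)‖_ρ^{1/m}`, the reciprocal of the radius of convergence,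
computed in `ℝ≥0∞`. -/
def convRadiusInv {n n' q' : ℕ} {F : Type*} [RCLike F] (ρ : ℝ)
    (A : (m : ℕ) → MMat n n' m q' F) : ℝ≥0∞ :=
  Filter.atTop.limsup fun m : ℕ => ENNReal.ofReal (rnorm ρ (A m)) ^ (1 / (m : ℝ))

/-- `r = limsup_m ‖A(m)‖_∞^{1/m}` computed in `ℝ≥0∞`. -/
def convRadiusInvInf {n n' q' : ℕ} {F : Type*} [RCLike F]
    (A : (m : ℕ) → MMat n n' m q' F) : ℝ≥0∞ :=
  Filter.atTop.limsup fun m : ℕ => ENNReal.ofReal (rnormInf (A m)) ^ (1 / (m : ℝ))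

section Aux
variable {n n' : ℕ} {F : Type*} [RCLike F]

lemma mfact_pos {m : ℕ} (α : Fin m → ℕ) : 0 < mfact α :=
  Finset.prod_pos fun i _ => Nat.factorial_pos _

lemma mfact_cast_ne_zero {m : ℕ} (α : Fin m → ℕ) : (mfact α : F) ≠ 0 :=
  Nat.cast_ne_zero.2 (mfact_pos α).ne'

lemma mdeg_add {m : ℕ} (a b : Fin m → ℕ) : mdeg (a + b) = mdeg a + mdeg b := by
  simp [mdeg, Finset.sum_add_distrib]

/-- Embed a pair of multi-indices into `(Fin n ⊕ Fin n') →₀ ℕ`. -/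
def emb (β : Fin n → ℕ) (β' : Fin n' → ℕ) : (Fin n ⊕ Fin n') →₀ ℕ :=
  Finsupp.equivFunOnFinite.symm (Sum.elim β β')

lemma emb_add (β γ : Fin n → ℕ) (β' γ' : Fin n' → ℕ) :
    emb (β + γ) (β' + γ') = emb β β' + emb γ γ' := by
  ext x
  cases x <;> simp [emb, Finsupp.equivFunOnFinite] <;> rfl

lemma emb_inj {β γ : Fin n → ℕ} {β' γ' : Fin n' → ℕ} (h : emb β β' = emb γ γ') :
    β = γ ∧ β' = γ' := by
  have h2 : Sum.elim β β' = Sum.elim γ γ' := Finsupp.equivFunOnFinite.symm.injective h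
  exact ⟨funext fun i => congrFun h2 (Sum.inl i), funext fun j => congrFun h2 (Sum.inr j)⟩

/-- The generating polynomial of a matrix. -/
def psiM {p p' : ℕ} (A : MMat n n' p p' F) : MvPolynomial (Fin n ⊕ Fin n') F :=
  ∑ b : MIdx n p × MIdx n' p',
    MvPolynomial.monomial (emb b.1.1 b.2.1) (A b.1 b.2 / (mfact b.1.1 : F))

lemma psiM_eq_zero {p p' : ℕ} {A : MMat n n' p p' F} (h : psiM A = 0) : A = 0 := by
  funext α α'
  have hc := congrArg (MvPolynomial.coeff (emb α.1 α'.1)) h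
  rw [psiM] at hc
  simp only [MvPolynomial.coeff_sum, MvPolynomial.coeff_monomial, MvPolynomial.coeff_zero] at hc
  rw [Finset.sum_eq_single (α, α')] at hc
  · simp only [if_pos rfl] at hc
    have := mfact_cast_ne_zero (F := F) α.1
    field_simp at hc
    simpa [(mfact_pos α.1).ne'] using hc
  · rintro ⟨β, β'⟩ - hne
    rw [if_neg]
    intro he
    obtain ⟨h1, h2⟩ := emb_inj he
    exact hne (Prod.ext (Subtype.ext h1) (Subtype.ext h2))
  · simp
end Aux

section Mul
variable {n n' : ℕ} {F : Type*} [RCLike F]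

lemma psiM_oprod {p p' q q' : ℕ} (A : MMat n n' p p' F) (B : MMat n n' q q' F) :
    psiM (oprod A B) = psiM A * psiM B := by
  classical
  rw [psiM, psiM, psiM, Finset.sum_mul_sum]
  simp only [MvPolynomial.monomial_mul]
  have lhs_eq : ∀ d : MIdx n (p+q) × MIdx n' (p'+q'),
      (MvPolynomial.monomial (emb d.1.1 d.2.1)) (oprod A B d.1 d.2 / (mfact d.1.1 : F)) =
      ∑ b : MIdx n p × MIdx n' p',
        if h : (∀ i, b.1.1 i ≤ d.1.1 i) ∧ (∀ j, b.2.1 j ≤ d.2.1 j) then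
          (MvPolynomial.monomial (emb d.1.1 d.2.1))
            (((mfact d.1.1 : F) / ((mfact b.1.1 : F) * (mfact (d.1.1 - b.1.1) : F))) * A b.1 b.2 *
              B ⟨d.1.1 - b.1.1, mdeg_sub d.1 b.1 h.1⟩ ⟨d.2.1 - b.2.1, mdeg_sub d.2 b.2 h.2⟩ /
                (mfact d.1.1 : F))
        else 0 := by
    intro d
    rw [oprod, ← Fintype.sum_prod_type', Finset.sum_div, map_sum]
    refine Finset.sum_congr rfl fun b _ => ?_
    by_cases h : (∀ i, b.1.1 i ≤ d.1.1 i) ∧ (∀ j, b.2.1 j ≤ d.2.1 j)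
    · rw [dif_pos h, dif_pos h]
    · rw [dif_neg h, dif_neg h, zero_div, map_zero]
  calc (∑ d : MIdx n (p+q) × MIdx n' (p'+q'),
          (MvPolynomial.monomial (emb d.1.1 d.2.1)) (oprod A B d.1 d.2 / (mfact d.1.1 : F)))
      = ∑ d : MIdx n (p+q) × MIdx n' (p'+q'), ∑ b : MIdx n p × MIdx n' p',
          if h : (∀ i, b.1.1 i ≤ d.1.1 i) ∧ (∀ j, b.2.1 j ≤ d.2.1 j) then
            (MvPolynomial.monomial (emb d.1.1 d.2.1))
              (((mfact d.1.1 : F) / ((mfact b.1.1 : F) * (mfact (d.1.1 - b.1.1) : F))) * A b.1 b.2 *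
                B ⟨d.1.1 - b.1.1, mdeg_sub d.1 b.1 h.1⟩ ⟨d.2.1 - b.2.1, mdeg_sub d.2 b.2 h.2⟩ /
                  (mfact d.1.1 : F))
          else 0 := Finset.sum_congr rfl fun d _ => lhs_eq d
    _ = ∑ b : MIdx n p × MIdx n' p', ∑ d : MIdx n (p+q) × MIdx n' (p'+q'),
          if h : (∀ i, b.1.1 i ≤ d.1.1 i) ∧ (∀ j, b.2.1 j ≤ d.2.1 j) then
            (MvPolynomial.monomial (emb d.1.1 d.2.1))
              (((mfact d.1.1 : F) / ((mfact b.1.1 : F) * (mfact (d.1.1 - b.1.1) : F))) * A b.1 b.2 *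
                B ⟨d.1.1 - b.1.1, mdeg_sub d.1 b.1 h.1⟩ ⟨d.2.1 - b.2.1, mdeg_sub d.2 b.2 h.2⟩ /
                  (mfact d.1.1 : F))
          else 0 := Finset.sum_comm
    _ = _ := ?_
  refine Finset.sum_congr rfl fun b _ => ?_
  have key : ∀ d : MIdx n (p+q) × MIdx n' (p'+q'),
      (if h : (∀ i, b.1.1 i ≤ d.1.1 i) ∧ (∀ j, b.2.1 j ≤ d.2.1 j) then
          (MvPolynomial.monomial (emb d.1.1 d.2.1))
            (((mfact d.1.1 : F) / ((mfact b.1.1 : F) * (mfact (d.1.1 - b.1.1) : F))) * A b.1 b.2 *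
              B ⟨d.1.1 - b.1.1, mdeg_sub d.1 b.1 h.1⟩ ⟨d.2.1 - b.2.1, mdeg_sub d.2 b.2 h.2⟩ /
                (mfact d.1.1 : F))
        else 0) ≠ 0 →
      (∀ i, b.1.1 i ≤ d.1.1 i) ∧ (∀ j, b.2.1 j ≤ d.2.1 j) := by
    intro d hd
    by_contra hc
    exact hd (dif_neg hc)
  -- value equality under the condition
  have hval : ∀ (d : MIdx n (p+q) × MIdx n' (p'+q'))
      (h : (∀ i, b.1.1 i ≤ d.1.1 i) ∧ (∀ j, b.2.1 j ≤ d.2.1 j)),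
      (MvPolynomial.monomial (emb d.1.1 d.2.1))
        (((mfact d.1.1 : F) / ((mfact b.1.1 : F) * (mfact (d.1.1 - b.1.1) : F))) * A b.1 b.2 *
          B ⟨d.1.1 - b.1.1, mdeg_sub d.1 b.1 h.1⟩ ⟨d.2.1 - b.2.1, mdeg_sub d.2 b.2 h.2⟩ /
            (mfact d.1.1 : F)) =
      (MvPolynomial.monomial
          (emb b.1.1 b.2.1 + emb (d.1.1 - b.1.1) (d.2.1 - b.2.1)))
        (A b.1 b.2 / (mfact b.1.1 : F) *
          (B ⟨d.1.1 - b.1.1, mdeg_sub d.1 b.1 h.1⟩ ⟨d.2.1 - b.2.1, mdeg_sub d.2 b.2 h.2⟩ /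
            (mfact (d.1.1 - b.1.1) : F))) := by
    intro d h
    have hd1 : d.1.1 = b.1.1 + (d.1.1 - b.1.1) := by
      funext i; exact (Nat.add_sub_cancel' (h.1 i)).symm
    have hd2 : d.2.1 = b.2.1 + (d.2.1 - b.2.1) := by
      funext j; exact (Nat.add_sub_cancel' (h.2 j)).symm
    have hexp : emb d.1.1 d.2.1 = emb b.1.1 b.2.1 + emb (d.1.1 - b.1.1) (d.2.1 - b.2.1) := by
      conv_lhs => rw [hd1, hd2]
      exact emb_add _ _ _ _
    rw [hexp]
    congr 1
    have h1 := mfact_cast_ne_zero (F := F) d.1.1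
    have h2 := mfact_cast_ne_zero (F := F) b.1.1
    have h3 := mfact_cast_ne_zero (F := F) (d.1.1 - b.1.1)
    field_simp
  refine Finset.sum_bij_ne_zero
    (fun d _ hd => (⟨d.1.1 - b.1.1, mdeg_sub d.1 b.1 (key d hd).1⟩,
                    ⟨d.2.1 - b.2.1, mdeg_sub d.2 b.2 (key d hd).2⟩))
    (fun _ _ _ => Finset.mem_univ _) ?_ ?_ ?_
  · intro d₁ m₁ h₁ d₂ m₂ h₂ hdd
    obtain ⟨k1a, k1b⟩ := key d₁ h₁
    obtain ⟨k2a, k2b⟩ := key d₂ h₂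
    rw [Prod.ext_iff] at hdd
    obtain ⟨e1', e2'⟩ := hdd
    have e1 : d₁.1.1 - b.1.1 = d₂.1.1 - b.1.1 := congrArg Subtype.val e1'
    have e2 : d₁.2.1 - b.2.1 = d₂.2.1 - b.2.1 := congrArg Subtype.val e2'
    refine Prod.ext (Subtype.ext (funext fun i => ?_)) (Subtype.ext (funext fun j => ?_))
    · have := congrFun e1 i
      have l1 := k1a i; have l2 := k2a i
      simp only [Pi.sub_apply] at this
      omega
    · have := congrFun e2 j
      have l1 := k1b j; have l2 := k2b j
      simp only [Pi.sub_apply] at this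
      omega
  · rintro c - hc
    have h : (∀ i, b.1.1 i ≤ (b.1.1 + c.1.1) i) ∧ (∀ j, b.2.1 j ≤ (b.2.1 + c.2.1) j) :=
      ⟨fun i => Nat.le_add_right _ _, fun j => Nat.le_add_right _ _⟩
    have hBidx : ∀ (x : MIdx n q) (y : MIdx n' q'), x = c.1 → y = c.2 →
        B x y / (mfact x.1 : F) = B c.1 c.2 / (mfact c.1.1 : F) := by
      rintro x y rfl rfl; rfl
    refine ⟨(⟨b.1.1 + c.1.1, by rw [mdeg_add, b.1.2, c.1.2]⟩,
             ⟨b.2.1 + c.2.1, by rw [mdeg_add, b.2.2, c.2.2]⟩), Finset.mem_univ _, ?_, ?_⟩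
    · dsimp only
      have hv := hval (⟨b.1.1 + c.1.1, by rw [mdeg_add, b.1.2, c.1.2]⟩,
             ⟨b.2.1 + c.2.1, by rw [mdeg_add, b.2.2, c.2.2]⟩) h
      dsimp only at hv
      rw [dif_pos h, hv]
      have exp_eq : emb ((b.1.1 + c.1.1) - b.1.1) ((b.2.1 + c.2.1) - b.2.1) = emb c.1.1 c.2.1 := by
        congr 1 <;> funext i <;> simp
      rw [exp_eq, hBidx _ _ (Subtype.ext (funext fun i => by simp))
        (Subtype.ext (funext fun j => by simp))]
      exact hc
    · dsimp only
      exact Prod.ext (Subtype.ext (funext fun i => by simp))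
        (Subtype.ext (funext fun j => by simp))
  · intro d _ hd
    rw [dif_pos (key d hd), hval d (key d hd)]
end Mul

section NormLemmas
variable {n n' : ℕ} {F : Type*} [RCLike F]

lemma oprod_eq_zero {p p' q q' : ℕ} {A : MMat n n' p p' F} {B : MMat n n' q q' F}
    (h : oprod A B = 0) : A = 0 ∨ B = 0 := by
  have h0 : psiM A * psiM B = 0 := by
    rw [← psiM_oprod, h]
    simp [psiM]
  rcases mul_eq_zero.1 h0 with h1 | h1
  · exact Or.inl (psiM_eq_zero h1)
  · exact Or.inr (psiM_eq_zero h1)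

lemma oprod_smul {p p' q q' : ℕ} (c d : F) (A : MMat n n' p p' F) (B : MMat n n' q q' F) :
    oprod (c • A) (d • B) = (c * d) • oprod A B := by
  funext α α'
  simp only [oprod, Pi.smul_apply, smul_eq_mul, Finset.mul_sum]
  refine Finset.sum_congr rfl fun β _ => Finset.sum_congr rfl fun β' _ => ?_
  by_cases h : (∀ i, β.1 i ≤ α.1 i) ∧ (∀ j, β'.1 j ≤ α'.1 j)
  · rw [dif_pos h, dif_pos h]; ring
  · rw [dif_neg h, dif_neg h, mul_zero]

variable {ρ : ℝ}

lemma rnorm_sum_nonneg {p p' : ℕ} (A : MMat n n' p p' F) :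
    0 ≤ ∑ α : MIdx n p, ∑ α' : MIdx n' p',
      ‖A α α'‖ ^ ρ / ((mfact α.1 : ℝ) * ((p.factorial * p'.factorial : ℕ) : ℝ) ^ (ρ - 1)) :=
  Finset.sum_nonneg fun α _ => Finset.sum_nonneg fun α' _ =>
    div_nonneg (Real.rpow_nonneg (norm_nonneg _) _)
      (mul_nonneg (Nat.cast_nonneg _) (Real.rpow_nonneg (Nat.cast_nonneg _) _))

lemma rnorm_nonneg {p p' : ℕ} (A : MMat n n' p p' F) : 0 ≤ rnorm ρ A :=
  Real.rpow_nonneg (rnorm_sum_nonneg A) _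

lemma rnorm_zero {p p' : ℕ} (hρ : ρ ≠ 0) : rnorm ρ (0 : MMat n n' p p' F) = 0 := by
  rw [rnorm]
  simp [Real.zero_rpow hρ, Real.zero_rpow (inv_ne_zero hρ)]

lemma rnorm_pos {p p' : ℕ} {A : MMat n n' p p' F} (hρ : 0 < ρ) (hA : A ≠ 0) :
    0 < rnorm ρ A := by
  obtain ⟨α, hα⟩ := Function.ne_iff.1 hA
  obtain ⟨α', hα'⟩ := Function.ne_iff.1 hα
  refine Real.rpow_pos_of_pos ?_ _
  have hterm : 0 < ‖A α α'‖ ^ ρ /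
      ((mfact α.1 : ℝ) * ((p.factorial * p'.factorial : ℕ) : ℝ) ^ (ρ - 1)) := by
    apply div_pos
    · exact Real.rpow_pos_of_pos (norm_pos_iff.2 hα') _
    · apply mul_pos
      · exact_mod_cast mfact_pos α.1
      · exact Real.rpow_pos_of_pos (by positivity) _
  have h2 : ‖A α α'‖ ^ ρ / ((mfact α.1 : ℝ) * ((p.factorial * p'.factorial : ℕ) : ℝ) ^ (ρ - 1))
      ≤ ∑ β' : MIdx n' p', ‖A α β'‖ ^ ρ /
        ((mfact α.1 : ℝ) * ((p.factorial * p'.factorial : ℕ) : ℝ) ^ (ρ - 1)) :=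
    Finset.single_le_sum (fun β _ => div_nonneg (Real.rpow_nonneg (norm_nonneg _) _)
      (mul_nonneg (Nat.cast_nonneg _) (Real.rpow_nonneg (Nat.cast_nonneg _) _)))
      (Finset.mem_univ α')
  have h3 : (∑ β' : MIdx n' p', ‖A α β'‖ ^ ρ /
        ((mfact α.1 : ℝ) * ((p.factorial * p'.factorial : ℕ) : ℝ) ^ (ρ - 1)))
      ≤ ∑ β : MIdx n p, ∑ β' : MIdx n' p', ‖A β β'‖ ^ ρ /
        ((mfact β.1 : ℝ) * ((p.factorial * p'.factorial : ℕ) : ℝ) ^ (ρ - 1)) :=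
    Finset.single_le_sum (f := fun β => ∑ β' : MIdx n' p', ‖A β β'‖ ^ ρ /
        ((mfact β.1 : ℝ) * ((p.factorial * p'.factorial : ℕ) : ℝ) ^ (ρ - 1)))
      (fun β _ => Finset.sum_nonneg fun β' _ =>
      div_nonneg (Real.rpow_nonneg (norm_nonneg _) _)
      (mul_nonneg (Nat.cast_nonneg _) (Real.rpow_nonneg (Nat.cast_nonneg _) _)))
      (Finset.mem_univ α)
  exact hterm.trans_le (h2.trans h3)

lemma rnorm_smul {p p' : ℕ} (hρ : ρ ≠ 0) (c : F) (A : MMat n n' p p' F) :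
    rnorm ρ (c • A) = ‖c‖ * rnorm ρ A := by
  have hsum : (∑ α : MIdx n p, ∑ α' : MIdx n' p', ‖(c • A) α α'‖ ^ ρ /
        ((mfact α.1 : ℝ) * ((p.factorial * p'.factorial : ℕ) : ℝ) ^ (ρ - 1)))
      = ‖c‖ ^ ρ * ∑ α : MIdx n p, ∑ α' : MIdx n' p', ‖A α α'‖ ^ ρ /
        ((mfact α.1 : ℝ) * ((p.factorial * p'.factorial : ℕ) : ℝ) ^ (ρ - 1)) := by
    rw [Finset.mul_sum]
    refine Finset.sum_congr rfl fun α _ => ?_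
    rw [Finset.mul_sum]
    refine Finset.sum_congr rfl fun α' _ => ?_
    rw [Pi.smul_apply, Pi.smul_apply, norm_smul,
      Real.mul_rpow (norm_nonneg _) (norm_nonneg _), mul_div_assoc]
  rw [rnorm, rnorm, hsum,
    Real.mul_rpow (Real.rpow_nonneg (norm_nonneg c) ρ) (rnorm_sum_nonneg A),
    ← Real.rpow_mul (norm_nonneg c), mul_one_div, div_self hρ, Real.rpow_one]

lemma rnorm_continuous {p p' : ℕ} (hρ : 1 ≤ ρ) :
    Continuous fun A : MMat n n' p p' F => rnorm ρ A := by
  have hρ0 : (0:ℝ) ≤ ρ := le_trans zero_le_one hρ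
  have h1 : Continuous fun x : ℝ => x ^ (1/ρ) :=
    continuous_iff_continuousAt.2 fun x =>
      Real.continuousAt_rpow_const _ _ (Or.inr (by positivity))
  refine h1.comp ?_
  refine continuous_finset_sum _ fun α _ => continuous_finset_sum _ fun α' _ => ?_
  refine Continuous.div_const ?_ _
  exact (((continuous_apply α').comp (continuous_apply α)).norm).rpow_const
    fun x => Or.inr hρ0

lemma oprod_continuous {p p' q q' : ℕ} :
    Continuous fun x : (MMat n n' p p' F) × (MMat n n' q q' F) => oprod x.1 x.2 := by
  refine continuous_pi fun α => continuous_pi fun α' => ?_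
  simp only [oprod]
  refine continuous_finset_sum _ fun β _ => continuous_finset_sum _ fun β' _ => ?_
  by_cases h : (∀ i, β.1 i ≤ α.1 i) ∧ (∀ j, β'.1 j ≤ α'.1 j)
  · simp only [dif_pos h]
    fun_prop
  · simp only [dif_neg h]
    exact continuous_const
end NormLemmas

section Main
variable {n n' : ℕ} {F : Type*} [RCLike F] {ρ : ℝ}

lemma rnorm_sum_eq_one {p p' : ℕ} {A : MMat n n' p p' F} (hρ : 0 < ρ)
    (h : rnorm ρ A = 1) :
    (∑ α : MIdx n p, ∑ α' : MIdx n' p', ‖A α α'‖ ^ ρ /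
      ((mfact α.1 : ℝ) * ((p.factorial * p'.factorial : ℕ) : ℝ) ^ (ρ - 1))) = 1 := by
  have hS := rnorm_sum_nonneg (ρ := ρ) A
  calc (∑ α : MIdx n p, ∑ α' : MIdx n' p', ‖A α α'‖ ^ ρ /
        ((mfact α.1 : ℝ) * ((p.factorial * p'.factorial : ℕ) : ℝ) ^ (ρ - 1)))
      = ((∑ α : MIdx n p, ∑ α' : MIdx n' p', ‖A α α'‖ ^ ρ /
        ((mfact α.1 : ℝ) * ((p.factorial * p'.factorial : ℕ) : ℝ) ^ (ρ - 1))) ^ (1/ρ)) ^ ρ := by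
        rw [← Real.rpow_mul hS, one_div, inv_mul_cancel₀ hρ.ne', Real.rpow_one]
    _ = (rnorm ρ A) ^ ρ := rfl
    _ = 1 := by rw [h, Real.one_rpow]

lemma entry_bound {p p' : ℕ} {A : MMat n n' p p' F} (hρ : 0 < ρ)
    (h : rnorm ρ A = 1) (α : MIdx n p) (α' : MIdx n' p') :
    ‖A α α'‖ ≤ ((mfact α.1 : ℝ) * ((p.factorial * p'.factorial : ℕ) : ℝ) ^ (ρ - 1)) ^ (1/ρ) := by
  have hD : (0:ℝ) < (mfact α.1 : ℝ) * ((p.factorial * p'.factorial : ℕ) : ℝ) ^ (ρ - 1) := by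
    apply mul_pos
    · exact_mod_cast mfact_pos α.1
    · exact Real.rpow_pos_of_pos (by positivity) _
  have h2 : ‖A α α'‖ ^ ρ / ((mfact α.1 : ℝ) * ((p.factorial * p'.factorial : ℕ) : ℝ) ^ (ρ - 1))
      ≤ 1 := by
    have hle1 : ‖A α α'‖ ^ ρ /
        ((mfact α.1 : ℝ) * ((p.factorial * p'.factorial : ℕ) : ℝ) ^ (ρ - 1))
        ≤ ∑ β' : MIdx n' p', ‖A α β'‖ ^ ρ /
          ((mfact α.1 : ℝ) * ((p.factorial * p'.factorial : ℕ) : ℝ) ^ (ρ - 1)) :=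
      Finset.single_le_sum (fun β _ => div_nonneg (Real.rpow_nonneg (norm_nonneg _) _) hD.le)
        (Finset.mem_univ α')
    have hle2 : (∑ β' : MIdx n' p', ‖A α β'‖ ^ ρ /
          ((mfact α.1 : ℝ) * ((p.factorial * p'.factorial : ℕ) : ℝ) ^ (ρ - 1)))
        ≤ ∑ β : MIdx n p, ∑ β' : MIdx n' p', ‖A β β'‖ ^ ρ /
          ((mfact β.1 : ℝ) * ((p.factorial * p'.factorial : ℕ) : ℝ) ^ (ρ - 1)) :=
      Finset.single_le_sum (f := fun β => ∑ β' : MIdx n' p', ‖A β β'‖ ^ ρ /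
          ((mfact β.1 : ℝ) * ((p.factorial * p'.factorial : ℕ) : ℝ) ^ (ρ - 1)))
        (fun β _ => Finset.sum_nonneg fun β' _ =>
          div_nonneg (Real.rpow_nonneg (norm_nonneg _) _)
            (mul_nonneg (Nat.cast_nonneg _) (Real.rpow_nonneg (Nat.cast_nonneg _) _)))
        (Finset.mem_univ α)
    exact (hle1.trans hle2).trans_eq (rnorm_sum_eq_one hρ h)
  have h3 : ‖A α α'‖ ^ ρ ≤ (mfact α.1 : ℝ) * ((p.factorial * p'.factorial : ℕ) : ℝ) ^ (ρ - 1) :=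
    (div_le_one hD).1 h2
  calc ‖A α α'‖ = (‖A α α'‖ ^ ρ) ^ (1/ρ) := by
        rw [← Real.rpow_mul (norm_nonneg _), mul_one_div, div_self hρ.ne', Real.rpow_one]
    _ ≤ _ := Real.rpow_le_rpow (Real.rpow_nonneg (norm_nonneg _) _) h3 (by positivity)

set_option maxHeartbeats 1000000 in
lemma sphere_compact {p p' : ℕ} (hρ : 1 ≤ ρ) :
    IsCompact {A : MMat n n' p p' F | rnorm ρ A = 1} := by
  have hρ0 : (0:ℝ) < ρ := lt_of_lt_of_le zero_lt_one hρ
  set R : ℝ := ∑ x : MIdx n p × MIdx n' p',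
    ((mfact x.1.1 : ℝ) * ((p.factorial * p'.factorial : ℕ) : ℝ) ^ (ρ - 1)) ^ (1/ρ) with hR
  have hR0 : 0 ≤ R :=
    Finset.sum_nonneg fun x _ => Real.rpow_nonneg
      (mul_nonneg (Nat.cast_nonneg _) (Real.rpow_nonneg (Nat.cast_nonneg _) _)) _
  apply Metric.isCompact_of_isClosed_isBounded
  · exact isClosed_singleton.preimage (rnorm_continuous hρ)
  · refine (Metric.isBounded_closedBall (x := (0 : MMat n n' p p' F)) (r := R)).subset ?_
    intro A hA
    rw [Metric.mem_closedBall, dist_zero_right]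
    refine (pi_norm_le_iff_of_nonneg hR0).2 fun α => (pi_norm_le_iff_of_nonneg hR0).2 fun α' => ?_
    refine (entry_bound hρ0 hA α α').trans ?_
    have hss := Finset.single_le_sum (f := fun x : MIdx n p × MIdx n' p' =>
        ((mfact x.1.1 : ℝ) * ((p.factorial * p'.factorial : ℕ) : ℝ) ^ (ρ - 1)) ^ (1/ρ))
      (fun x _ => Real.rpow_nonneg
        (mul_nonneg (Nat.cast_nonneg _) (Real.rpow_nonneg (Nat.cast_nonneg _) _)) _)
      (Finset.mem_univ (α, α'))
    exact hss

lemma rnorm_real_smul {p p' : ℕ} (hρ : ρ ≠ 0) {r : ℝ} (hr : 0 ≤ r) (A : MMat n n' p p' F) :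
    rnorm ρ (((r : F)) • A) = r * rnorm ρ A := by
  rw [rnorm_smul hρ, RCLike.norm_ofReal, abs_of_nonneg hr]

lemma exists_rnorm_one {p p' : ℕ} (hn : 0 < n) (hn' : 0 < n') (hρ : 1 ≤ ρ) :
    ∃ A : MMat n n' p p' F, rnorm ρ A = 1 := by
  have hρ0 : (0:ℝ) < ρ := lt_of_lt_of_le zero_lt_one hρ
  let A1 : MMat n n' p p' F := fun _ _ => 1
  have idx : MIdx n p := ⟨fun i => if i = ⟨0, hn⟩ then p else 0, by simp [mdeg]⟩
  have idx' : MIdx n' p' := ⟨fun i => if i = ⟨0, hn'⟩ then p' else 0, by simp [mdeg]⟩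
  have hA1 : A1 ≠ 0 := by
    intro h
    have := congrFun (congrFun h idx) idx'
    simp [A1] at this
  have hpos := rnorm_pos (ρ := ρ) hρ0 hA1
  refine ⟨(((rnorm ρ A1)⁻¹ : ℝ) : F) • A1, ?_⟩
  rw [rnorm_real_smul hρ0.ne' (inv_nonneg.2 hpos.le), inv_mul_cancel₀ hpos.ne']

theorem exists_pos_rnorm_oprod_lower' {n n' : ℕ} {F : Type*} [RCLike F] (hn : 0 < n)
    (hn' : 0 < n') (ρ : ℝ) (hρ : 1 ≤ ρ) (p p' q q' : ℕ) :
    ∃ lam : ℝ, 0 < lam ∧ ∀ (A : MMat n n' p p' F) (B : MMat n n' q q' F),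
      lam * (rnorm ρ A * rnorm ρ B) ≤ rnorm ρ (oprod A B) := by
  have hρ0 : (0:ℝ) < ρ := lt_of_lt_of_le zero_lt_one hρ
  set S : Set ((MMat n n' p p' F) × (MMat n n' q q' F)) :=
    {A : MMat n n' p p' F | rnorm ρ A = 1} ×ˢ {B : MMat n n' q q' F | rnorm ρ B = 1} with hS
  have hScomp : IsCompact S := (sphere_compact hρ).prod (sphere_compact hρ)
  obtain ⟨A₁, hA₁⟩ := exists_rnorm_one (F := F) (p := p) (p' := p') hn hn' hρ
  obtain ⟨B₁, hB₁⟩ := exists_rnorm_one (F := F) (p := q) (p' := q') hn hn' hρ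
  have hSne : S.Nonempty := ⟨(A₁, B₁), ⟨hA₁, hB₁⟩⟩
  have hg : Continuous fun x : (MMat n n' p p' F) × (MMat n n' q q' F) =>
      rnorm ρ (oprod x.1 x.2) := (rnorm_continuous hρ).comp oprod_continuous
  obtain ⟨x₀, hx₀S, hmin⟩ := hScomp.exists_isMinOn hSne hg.continuousOn
  have hx₁ : rnorm ρ x₀.1 = 1 := hx₀S.1
  have hx₂ : rnorm ρ x₀.2 = 1 := hx₀S.2
  have hx₀1 : x₀.1 ≠ 0 := fun h => by rw [h, rnorm_zero hρ0.ne'] at hx₁; norm_num at hx₁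
  have hx₀2 : x₀.2 ≠ 0 := fun h => by rw [h, rnorm_zero hρ0.ne'] at hx₂; norm_num at hx₂
  have hprod : oprod x₀.1 x₀.2 ≠ 0 := by
    intro h
    rcases oprod_eq_zero h with h | h
    exacts [hx₀1 h, hx₀2 h]
  refine ⟨rnorm ρ (oprod x₀.1 x₀.2), rnorm_pos hρ0 hprod, ?_⟩
  intro A B
  by_cases hA : A = 0
  · rw [hA, rnorm_zero hρ0.ne', zero_mul, mul_zero]
    exact rnorm_nonneg _
  by_cases hB : B = 0
  · rw [hB, rnorm_zero hρ0.ne', mul_zero, mul_zero]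
    exact rnorm_nonneg _
  have ha := rnorm_pos (ρ := ρ) hρ0 hA
  have hb := rnorm_pos (ρ := ρ) hρ0 hB
  set a := rnorm ρ A with hadef
  set b := rnorm ρ B with hbdef
  set A₀ : MMat n n' p p' F := ((a⁻¹ : ℝ) : F) • A with hA₀def
  set B₀ : MMat n n' q q' F := ((b⁻¹ : ℝ) : F) • B with hB₀def
  have hA₀ : rnorm ρ A₀ = 1 := by
    rw [hA₀def, rnorm_real_smul hρ0.ne' (inv_nonneg.2 ha.le), ← hadef, inv_mul_cancel₀ ha.ne']
  have hB₀ : rnorm ρ B₀ = 1 := by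
    rw [hB₀def, rnorm_real_smul hρ0.ne' (inv_nonneg.2 hb.le), ← hbdef, inv_mul_cancel₀ hb.ne']
  have hmem : (A₀, B₀) ∈ S := ⟨hA₀, hB₀⟩
  have hle := isMinOn_iff.1 hmin _ hmem
  have heq : rnorm ρ (oprod A₀ B₀) = a⁻¹ * b⁻¹ * rnorm ρ (oprod A B) := by
    rw [hA₀def, hB₀def, oprod_smul]
    have : (((a⁻¹ : ℝ) : F) * ((b⁻¹ : ℝ) : F)) = (((a⁻¹ * b⁻¹ : ℝ)) : F) := by
      push_cast; ring
    rw [this, rnorm_real_smul hρ0.ne' (by positivity)]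
  rw [heq] at hle
  calc rnorm ρ (oprod x₀.1 x₀.2) * (a * b)
      ≤ (a⁻¹ * b⁻¹ * rnorm ρ (oprod A B)) * (a * b) :=
        mul_le_mul_of_nonneg_right hle (by positivity)
    _ = rnorm ρ (oprod A B) := by field_simp
end Main

/-- For every real `ρ ≥ 1` and all `p, p', q, q'`, there is a positive constant
`λ = λ(p,p',q,q')` with `λ·‖A‖_ρ·‖B‖_ρ ≤ ‖A⊙B‖_ρ` for all `A ∈ M(p,p';F)`, `B ∈ M(q,q';F)`. -/
theorem exists_pos_rnorm_oprod_lower {n n' : ℕ} {F : Type*} [RCLike F] (hn : 0 < n)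
    (hn' : 0 < n') (ρ : ℝ) (hρ : 1 ≤ ρ) (p p' q q' : ℕ) :
    ∃ lam : ℝ, 0 < lam ∧ ∀ (A : MMat n n' p p' F) (B : MMat n n' q q' F),
      lam * (rnorm ρ A * rnorm ρ B) ≤ rnorm ρ (oprod A B) := by
  exact exists_pos_rnorm_oprod_lower' hn hn' ρ hρ p p' q q'

end
end

section
/- Let 1 ≤ ρ < ∞ with conjugate exponent ϱ (1/ρ + 1/ϱ = 1; ϱ = ∞ when ρ = 1). Set r = limsup_{m→∞} ‖A(m)‖_ρ^{1/m} and R = 1/r (R = ∞ if r = 0), and assume R < ∞. Then for every real R₁ > R·n^{(ρ−1)/ρ} there exists h̄ ∈ F^n with ‖h̄‖_ϱ = R₁ such that the power series Σ_{m≥0} x^{(m)}/m!·A(m) is not absolutely convergent at h̄. -/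
open scoped BigOperators ENNReal

noncomputable section

section AuxProof

lemma my_sum_rpow_le {ι : Type*} (s : Finset ι) (f : ι → ℝ) (hf : ∀ i ∈ s, 0 ≤ f i)
    {p : ℝ} (hp : 1 ≤ p) : ∑ i ∈ s, f i ^ p ≤ (∑ i ∈ s, f i) ^ p := by
  have hs : 0 ≤ ∑ i ∈ s, f i := Finset.sum_nonneg hf
  calc ∑ i ∈ s, f i ^ p ≤ ∑ i ∈ s, f i * (∑ j ∈ s, f j) ^ (p - 1) := by
        refine Finset.sum_le_sum fun i hi => ?_
        have h1 : f i ^ p = f i ^ (1 + (p - 1)) := by norm_num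
        rw [h1, Real.rpow_add' (hf i hi) (by linarith), Real.rpow_one]
        exact mul_le_mul_of_nonneg_left
          (Real.rpow_le_rpow (hf i hi) (Finset.single_le_sum hf hi) (by linarith)) (hf i hi)
    _ = (∑ i ∈ s, f i) ^ p := by
        rw [← Finset.sum_mul,
          show (∑ i ∈ s, f i) ^ p = (∑ i ∈ s, f i) ^ (1 + (p - 1)) by norm_num,
          Real.rpow_add' hs (by linarith), Real.rpow_one]

lemma my_mfact_pos {n : ℕ} (α : Fin n → ℕ) : 0 < mfact α :=
  Finset.prod_pos fun i _ => Nat.factorial_pos _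

lemma my_rnorm_le_sum {n n' m q' : ℕ} {F : Type*} [RCLike F] {ρ : ℝ} (hρ : 1 ≤ ρ)
    (B : MMat n n' m q' F) :
    rnorm ρ B ≤ ∑ α : MIdx n m, ∑ α' : MIdx n' q', ‖B α α'‖ / (mfact α.1 : ℝ) := by
  have hρ0 : (0:ℝ) < ρ := lt_of_lt_of_le one_pos hρ
  set S := ∑ α : MIdx n m, ∑ α' : MIdx n' q', ‖B α α'‖ / (mfact α.1 : ℝ) with hS
  have hS0 : 0 ≤ S := Finset.sum_nonneg fun α _ => Finset.sum_nonneg fun α' _ => by positivity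
  have key : (∑ α : MIdx n m, ∑ α' : MIdx n' q',
      ‖B α α'‖ ^ ρ / ((mfact α.1 : ℝ) * ((m.factorial * q'.factorial : ℕ) : ℝ) ^ (ρ - 1)))
      ≤ S ^ ρ := by
    have step1 : ∀ (α : MIdx n m) (α' : MIdx n' q'),
        ‖B α α'‖ ^ ρ / ((mfact α.1 : ℝ) * ((m.factorial * q'.factorial : ℕ) : ℝ) ^ (ρ - 1))
          ≤ (‖B α α'‖ / (mfact α.1 : ℝ)) ^ ρ := by
      intro α α'
      have hmf : (0:ℝ) < (mfact α.1 : ℝ) := by exact_mod_cast my_mfact_pos α.1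
      have hle : (mfact α.1 : ℝ) ≤ ((m.factorial * q'.factorial : ℕ) : ℝ) := by
        have h1 : mfact α.1 ∣ m.factorial := by
          have h2 := Nat.prod_factorial_dvd_factorial_sum Finset.univ α.1
          rwa [show (∑ i, α.1 i) = m from α.2] at h2
        exact_mod_cast Nat.le_of_dvd (by positivity)
          (h1.trans (Dvd.intro q'.factorial rfl))
      rw [Real.div_rpow (norm_nonneg _) hmf.le]
      have hpow : (mfact α.1 : ℝ) ^ ρ = (mfact α.1 : ℝ) * (mfact α.1 : ℝ) ^ (ρ - 1) := by
        rw [show ρ = 1 + (ρ - 1) by ring, Real.rpow_add hmf, Real.rpow_one]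
        ring_nf
      rw [hpow]
      refine div_le_div_of_nonneg_left (by positivity) (by positivity) ?_
      exact mul_le_mul_of_nonneg_left (Real.rpow_le_rpow hmf.le hle (by linarith)) hmf.le
    calc (∑ α : MIdx n m, ∑ α' : MIdx n' q',
        ‖B α α'‖ ^ ρ / ((mfact α.1 : ℝ) * ((m.factorial * q'.factorial : ℕ) : ℝ) ^ (ρ - 1)))
        ≤ ∑ α : MIdx n m, ∑ α' : MIdx n' q', (‖B α α'‖ / (mfact α.1 : ℝ)) ^ ρ :=
          Finset.sum_le_sum fun α _ => Finset.sum_le_sum fun α' _ => step1 α α'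
      _ ≤ ∑ α : MIdx n m, (∑ α' : MIdx n' q', ‖B α α'‖ / (mfact α.1 : ℝ)) ^ ρ :=
          Finset.sum_le_sum fun α _ =>
            my_sum_rpow_le _ _ (fun α' _ => by positivity) hρ
      _ ≤ (∑ α : MIdx n m, ∑ α' : MIdx n' q', ‖B α α'‖ / (mfact α.1 : ℝ)) ^ ρ :=
          my_sum_rpow_le _ _
            (fun α _ => Finset.sum_nonneg fun α' _ => by positivity) hρ
      _ = S ^ ρ := by rw [hS]
  have hD0 : (0:ℝ) ≤ ∑ α : MIdx n m, ∑ α' : MIdx n' q',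
      ‖B α α'‖ ^ ρ / ((mfact α.1 : ℝ) * ((m.factorial * q'.factorial : ℕ) : ℝ) ^ (ρ - 1)) :=
    Finset.sum_nonneg fun α _ => Finset.sum_nonneg fun α' _ => by positivity
  calc rnorm ρ B ≤ (S ^ ρ) ^ (1 / ρ) := Real.rpow_le_rpow hD0 key (by positivity)
    _ = S := by
        rw [← Real.rpow_mul hS0, mul_one_div_cancel (ne_of_gt hρ0), Real.rpow_one]

lemma my_Acast {n n' q' : ℕ} {F : Type*} [RCLike F] (A : (m : ℕ) → MMat n n' m q' F)
    {m : ℕ} (α : Fin n → ℕ) (h : mdeg α = m) (α' : MIdx n' q') :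
    A (mdeg α) ⟨α, rfl⟩ α' = A m ⟨α, h⟩ α' := by subst h; rfl

end AuxProof

/-- For `1 ≤ ρ < ∞` with conjugate exponent `ϱ` (computed in `ℝ≥0∞`, so `ϱ = ∞`
when `ρ = 1`), with `r = limsup_m ‖A(m)‖_ρ^{1/m}` and `R = 1/r` assumed finite, for every real
`R₁ > R·n^{(ρ−1)/ρ}` there is `h̄ ∈ F^n` with `‖h̄‖_ϱ = R₁` at which the power series
`Σ_m x^{(m)}/m!·A(m)` is not absolutely convergent. -/


theorem exists_not_absConv {n n' q' : ℕ} {F : Type*} [RCLike F] (hn : 0 < n) (hn' : 0 < n')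
    (ρ : ℝ) (hρ : 1 ≤ ρ) (ϱ : ℝ≥0∞) (hconj : 1 / ENNReal.ofReal ρ + 1 / ϱ = 1)
    (A : (m : ℕ) → MMat n n' m q' F)
    (hR : 1 / convRadiusInv ρ A ≠ ∞) (R₁ : ℝ)
    (hR₁ : (1 / convRadiusInv ρ A).toReal * (n : ℝ) ^ ((ρ - 1) / ρ) < R₁) :
    ∃ hb : Fin n → F, vnormE ϱ hb = R₁ ∧ ¬ AbsConvAt A hb := by
  classical
  haveI : Nonempty (Fin n) := ⟨⟨0, hn⟩⟩
  have hρ0 : (0:ℝ) < ρ := lt_of_lt_of_le one_pos hρ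
  obtain ⟨e, he⟩ : ∃ x : ℝ, x = (ρ - 1) / ρ := ⟨_, rfl⟩
  rw [← he] at hR₁
  have he0 : 0 ≤ e := he ▸ div_nonneg (by linarith) hρ0.le
  have hne : (0:ℝ) < (n : ℝ) ^ e := Real.rpow_pos_of_pos (by exact_mod_cast hn) e
  have hR₁pos : 0 < R₁ :=
    lt_of_le_of_lt (mul_nonneg ENNReal.toReal_nonneg hne.le) hR₁
  obtain ⟨t, ht⟩ : ∃ x : ℝ, x = R₁ / (n : ℝ) ^ e := ⟨_, rfl⟩
  have htpos : 0 < t := ht ▸ div_pos hR₁pos hne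
  have htR : (1 / convRadiusInv ρ A).toReal < t := ht ▸ (lt_div_iff₀ hne).mpr hR₁
  obtain ⟨hbv, hhbv⟩ : ∃ f : Fin n → F, f = fun _ => (t : F) := ⟨_, rfl⟩
  have hnorm : ∀ i, ‖hbv i‖ = t := fun i => by
    rw [hhbv]; simp [RCLike.norm_ofReal, abs_of_pos htpos]
  -- conjugate exponent computation
  have hϱ : 1 / ϱ = ENNReal.ofReal e := by
    have h1 : 1 / ENNReal.ofReal ρ = ENNReal.ofReal (1 / ρ) := by
      rw [one_div, one_div, ← ENNReal.ofReal_inv_of_pos hρ0]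
    have h2 : ENNReal.ofReal (1 / ρ) + ENNReal.ofReal e = 1 := by
      rw [← ENNReal.ofReal_add (by positivity) he0, he,
        show 1 / ρ + (ρ - 1) / ρ = 1 by field_simp; ring, ENNReal.ofReal_one]
    rw [h1] at hconj
    exact (ENNReal.add_right_inj ENNReal.ofReal_ne_top).mp (hconj.trans h2.symm)
  -- the norm of hbv
  have hv : vnormE ϱ hbv = R₁ := by
    by_cases hinf : ϱ = ∞
    · have he00 : e = 0 := by
        rw [hinf] at hϱ
        simp only [one_div, ENNReal.inv_top] at hϱ
        have := ENNReal.ofReal_eq_zero.mp hϱ.symm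
        linarith
      have ht1 : t = R₁ := by rw [ht, he00, Real.rpow_zero, div_one]
      rw [vnormE, if_pos hinf]
      simp only [hnorm]
      rw [ciSup_const, ht1]
    · have hofe : ENNReal.ofReal e ≠ 0 := by
        rw [← hϱ]
        simp only [one_div, ne_eq, ENNReal.inv_eq_zero]
        exact hinf
      have he0' : 0 < e := by
        rcases lt_or_eq_of_le he0 with h | h
        · exact h
        · exact absurd (by rw [← h, ENNReal.ofReal_zero]) hofe
      have hϱval : ϱ = (ENNReal.ofReal e)⁻¹ := by
        rw [← inv_inv ϱ, ← one_div ϱ, hϱ]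
      have hσ : ϱ.toReal = 1 / e := by
        rw [hϱval, ENNReal.toReal_inv, ENNReal.toReal_ofReal he0, one_div]
      have hσ0 : 0 < ϱ.toReal := by rw [hσ]; positivity
      rw [vnormE, if_neg hinf]
      simp only [hnorm]
      rw [Finset.sum_const, Finset.card_univ, Fintype.card_fin, nsmul_eq_mul,
        Real.mul_rpow (by positivity) (by positivity),
        ← Real.rpow_mul htpos.le, mul_one_div_cancel (ne_of_gt hσ0), Real.rpow_one,
        hσ, one_div_one_div, ht]
      field_simp
  refine ⟨hbv, hv, ?_⟩
  intro habs
  -- summability of the column-summed series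
  obtain ⟨g, hg⟩ : ∃ g : (Fin n → ℕ) → ℝ, g = fun α => ∑ α' : MIdx n' q',
      ‖(∏ i, hbv i ^ α i) / (mfact α : F) * A (mdeg α) ⟨α, rfl⟩ α'‖ := ⟨_, rfl⟩
  have hgsummable : Summable g := by
    rw [hg]; exact summable_sum fun α' _ => habs α'
  have hgnonneg : ∀ α, 0 ≤ g α := fun α => by
    rw [hg]; exact Finset.sum_nonneg fun α' _ => norm_nonneg _
  obtain ⟨T, hT⟩ : ∃ x : ℝ, x = ∑' α, g α := ⟨_, rfl⟩
  obtain ⟨M, hM⟩ : ∃ x : ℝ, x = max T 1 := ⟨_, rfl⟩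
  have hMpos : (0:ℝ) < M := hM ▸ lt_of_lt_of_le one_pos (le_max_right _ _)
  -- the partial sums over degree-m indices
  have hgs : ∀ m : ℕ, ∑ α ∈ Finset.Nat.antidiagonalTuple n m, g α
      = t ^ m * (∑ α : MIdx n m, ∑ α' : MIdx n' q', ‖A m α α'‖ / (mfact α.1 : ℝ)) := by
    intro m
    rw [Finset.sum_subtype (p := fun a : Fin n → ℕ => mdeg a = m)
      (Finset.Nat.antidiagonalTuple n m)
      (fun α => by simp [Finset.Nat.mem_antidiagonalTuple, mdeg]) g]
    rw [Finset.mul_sum]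
    refine Finset.sum_congr rfl fun α _ => ?_
    obtain ⟨a, ha⟩ := α
    rw [hg, Finset.mul_sum]
    refine Finset.sum_congr rfl fun α' _ => ?_
    rw [my_Acast A a ha α']
    subst ha
    rw [norm_mul, norm_div, norm_prod]
    simp only [norm_pow, hnorm, RCLike.norm_natCast]
    rw [Finset.prod_pow_eq_pow_sum]
    show t ^ mdeg a / (mfact a : ℝ) * ‖A (mdeg a) ⟨a, rfl⟩ α'‖
      = t ^ mdeg a * (‖A (mdeg a) ⟨a, rfl⟩ α'‖ / (mfact a : ℝ))
    ring
  -- the key bound on rnorm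
  have hbound : ∀ m : ℕ, rnorm ρ (A m) ≤ M / t ^ m := by
    intro m
    have h1 : t ^ m * (∑ α : MIdx n m, ∑ α' : MIdx n' q', ‖A m α α'‖ / (mfact α.1 : ℝ)) ≤ T := by
      rw [← hgs m, hT]
      exact Summable.sum_le_tsum _ (fun a _ => hgnonneg a) hgsummable
    have h2 : rnorm ρ (A m)
        ≤ ∑ α : MIdx n m, ∑ α' : MIdx n' q', ‖A m α α'‖ / (mfact α.1 : ℝ) :=
      my_rnorm_le_sum hρ (A m)
    rw [le_div_iff₀ (pow_pos htpos m)]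
    calc rnorm ρ (A m) * t ^ m
        ≤ (∑ α : MIdx n m, ∑ α' : MIdx n' q', ‖A m α α'‖ / (mfact α.1 : ℝ)) * t ^ m :=
          mul_le_mul_of_nonneg_right h2 (pow_pos htpos m).le
      _ = t ^ m * (∑ α : MIdx n m, ∑ α' : MIdx n' q', ‖A m α α'‖ / (mfact α.1 : ℝ)) := by ring
      _ ≤ T := h1
      _ ≤ M := hM ▸ le_max_left _ _
  -- choose an intermediate radius
  obtain ⟨t', ht'⟩ : ∃ x : ℝ, x = ((1 / convRadiusInv ρ A).toReal + t) / 2 := ⟨_, rfl⟩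
  have ht'1 : (1 / convRadiusInv ρ A).toReal < t' := by rw [ht']; linarith
  have ht'2 : t' < t := by rw [ht']; linarith
  have ht'pos : 0 < t' := by
    have h8 := ENNReal.toReal_nonneg (a := 1 / convRadiusInv ρ A)
    rw [ht']; linarith
  -- eventual bound on rnorm
  have hq1 : t' / t < 1 := (div_lt_one htpos).mpr ht'2
  have htend := tendsto_pow_atTop_nhds_zero_of_lt_one
    (by positivity : (0:ℝ) ≤ t' / t) hq1
  have hev : ∀ᶠ m : ℕ in Filter.atTop, rnorm ρ (A m) ≤ (1 / t') ^ m := by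
    filter_upwards [htend.eventually_lt_const (by positivity : (0:ℝ) < 1 / M)] with m hm
    refine (hbound m).trans ?_
    rw [div_pow, one_pow, div_le_div_iff₀ (pow_pos htpos m) (pow_pos ht'pos m)]
    rw [div_pow] at hm
    have h7 := (div_lt_div_iff₀ (pow_pos htpos m) hMpos).mp hm
    nlinarith [pow_pos ht'pos m, pow_pos htpos m]
  -- pass to the limsup
  have hlim : convRadiusInv ρ A ≤ ENNReal.ofReal (1 / t') := by
    rw [convRadiusInv]
    apply Filter.limsup_le_of_le (by isBoundedDefault)
    filter_upwards [hev, Filter.eventually_ge_atTop 1] with m hm hm1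
    have hm0 : (m:ℝ) ≠ 0 := Nat.cast_ne_zero.mpr (by omega)
    calc (ENNReal.ofReal (rnorm ρ (A m))) ^ (1 / (m:ℝ))
        ≤ (ENNReal.ofReal ((1 / t') ^ m)) ^ (1 / (m:ℝ)) :=
          ENNReal.rpow_le_rpow (ENNReal.ofReal_le_ofReal hm) (by positivity)
      _ = ((ENNReal.ofReal (1 / t')) ^ (m:ℕ)) ^ (1 / (m:ℝ)) := by
          rw [ENNReal.ofReal_pow (by positivity)]
      _ = ENNReal.ofReal (1 / t') := by
          rw [← ENNReal.rpow_natCast, ← ENNReal.rpow_mul,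
            mul_one_div_cancel hm0, ENNReal.rpow_one]
  have h5 : ENNReal.ofReal t' ≤ 1 / convRadiusInv ρ A := by
    rw [one_div, ← inv_inv (ENNReal.ofReal t')]
    refine ENNReal.inv_le_inv.mpr ?_
    refine hlim.trans_eq ?_
    rw [one_div, ENNReal.ofReal_inv_of_pos ht'pos]
  have h6 : t' ≤ (1 / convRadiusInv ρ A).toReal :=
    (ENNReal.ofReal_le_iff_le_toReal hR).mp h5
  linarith

end
end
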